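/- arXiv:2101.07000 — 3 statements merged into one kernel-verified Lean document; each statement's English description precedes it below -/
import Mathlib

section
/- Let (T,σ) be the least resolved tree (with root ρ) of some 2-colored best match graph G(T,σ). Then G(T,σ) is connected if and only if the set of support leaves of the root is nonempty, i.e., S_ρ ≠ ∅. -/
/-- A (finite) rooted tree on vertex type `V`, encoded by its ancestor relation:
`anc u v` means that `u` is an ancestor of `v`, i.e. `u` lies on the path from
the root to `v` (in particular the relation is reflexive, `v ⪯_T u ↔ anc u v`). -/
structure RTree (V : Type) where
  anc : V → V → Prop
  refl : ∀ v, anc v v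
  antisymm : ∀ u v, anc u v → anc v u → u = v
  trans : ∀ u v w, anc u v → anc v w → anc u w
  root : V
  root_anc : ∀ v, anc root v
  chain : ∀ u v w, anc u w → anc v w → anc u v ∨ anc v u

namespace RTree

variable {V C : Type}

/-- a leaf: a vertex without proper descendants. -/
def IsLeaf (T : RTree V) (v : V) : Prop := ∀ w, T.anc v w → w = v

/-- `v` is a child of `u`: `v ≺_T u` with no vertex strictly in between. -/
def IsChild (T : RTree V) (v u : V) : Prop :=
  T.anc u v ∧ u ≠ v ∧ ∀ w, T.anc u w → T.anc w v → w = u ∨ w = v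

/-- phylogenetic: every inner vertex has at least two children. -/
def Phylo (T : RTree V) : Prop :=
  ∀ u, ¬ T.IsLeaf u → ∃ v w, v ≠ w ∧ T.IsChild v u ∧ T.IsChild w u

/-- the leaf set `L(T)`. -/
def leaves (T : RTree V) : Set V := {x | T.IsLeaf x}

/-- `y` is a best match of `x` in the leaf-colored tree `(T,σ)`:
both are leaves, `σ x ≠ σ y`, and for every leaf `y'` of the color `σ y` we have
`lca(x,y) ⪯_T lca(x,y')`, i.e. every common ancestor of `x` and `y'` is an
ancestor of `y`.  These are exactly the arcs of the best match graph `G(T,σ)`,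
whose vertex set is the leaf set of `T`. -/
def BestMatch (T : RTree V) (σ : V → C) (x y : V) : Prop :=
  T.IsLeaf x ∧ T.IsLeaf y ∧ σ x ≠ σ y ∧
    ∀ y', T.IsLeaf y' → σ y' = σ y →
      ∀ u, T.anc u x → T.anc u y' → T.anc u y

/-- the subtree `T(v)` of `T` rooted at `v`. -/
def subtree (T : RTree V) (v : V) : RTree {w : V // T.anc v w} where
  anc a b := T.anc a.1 b.1
  refl a := T.refl a.1
  antisymm a b h1 h2 := Subtype.ext (T.antisymm _ _ h1 h2)
  trans a b c h1 h2 := T.trans _ _ _ h1 h2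
  root := ⟨v, T.refl v⟩
  root_anc a := a.2
  chain a b c h1 h2 := T.chain _ _ _ h1 h2

/-- contraction of the tree edge between the non-root vertex `v` and its
parent: the vertex `v` is identified with its parent, i.e. deleted. -/
def contract (T : RTree V) (v : V) (hv : v ≠ T.root) : RTree {w : V // w ≠ v} where
  anc a b := T.anc a.1 b.1
  refl a := T.refl a.1
  antisymm a b h1 h2 := Subtype.ext (T.antisymm _ _ h1 h2)
  trans a b c h1 h2 := T.trans _ _ _ h1 h2
  root := ⟨T.root, Ne.symm hv⟩
  root_anc a := T.root_anc a.1
  chain a b c h1 h2 := T.chain _ _ _ h1 h2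

/-- The edge of `T` between `v` and its parent is redundant with respect to
`G(T,σ)`: contracting it yields a tree that still explains `G(T,σ)`, i.e. the
contracted tree has the same leaf set and induces the same best-match arcs.
(Edges of a rooted tree are identified with their lower endpoint `v`.) -/
def Redundant (T : RTree V) (σ : V → C) (v : V) : Prop :=
  ∃ hv : v ≠ T.root,
    ¬ T.IsLeaf v ∧
    (∀ w : {w : V // w ≠ v}, T.IsLeaf w.1 ↔ (T.contract v hv).IsLeaf w) ∧
    (∀ x y : {w : V // w ≠ v},
      (T.BestMatch σ x.1 y.1 ↔ (T.contract v hv).BestMatch (fun w => σ w.1) x y))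

/-- `(T,σ)` is the least resolved tree (of the BMG `G(T,σ)`): a phylogenetic
tree none of whose edges is redundant. -/
def LeastResolved (T : RTree V) (σ : V → C) : Prop :=
  T.Phylo ∧ ∀ v, ¬ T.Redundant σ v

/-- the support leaves `S_u = child_T(u) ∩ L(T)` of a vertex `u`. -/
def SupportLeaves (T : RTree V) (u : V) : Set V :=
  {v | T.IsChild v u ∧ T.IsLeaf v}

/-- the set of colors `σ(L(T(v)))` occurring on leaves of the subtree `T(v)`. -/
def subColors (T : RTree V) (σ : V → C) (v : V) : Set C :=
  σ '' {x | T.IsLeaf x ∧ T.anc v x}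

/-- the set of colors `σ(L(T))` of the leaves of `T`. -/
def leafColors (T : RTree V) (σ : V → C) : Set C := σ '' T.leaves

/-- the leaf coloring uses exactly two colors, i.e. `G(T,σ)` is a 2-BMG. -/
def TwoColored (T : RTree V) (σ : V → C) : Prop :=
  ∃ c₁ c₂ : C, c₁ ≠ c₂ ∧ T.leafColors σ = {c₁, c₂}

end RTree

/-- the digraph with arc relation `A`, restricted to the vertex set `S`, is
connected: between any two vertices of `S` there is a path inside `S` in the
underlying undirected graph. -/
def ConnectedOn {β : Type} (A : β → β → Prop) (S : Set β) : Prop :=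
  S.Nonempty ∧ ∀ x ∈ S, ∀ y ∈ S,
    Relation.ReflTransGen (fun a b => a ∈ S ∧ b ∈ S ∧ (A a b ∨ A b a)) x y

/-- `K` is a connected component of the digraph induced by the arc relation `A`
on the vertex set `S`: a maximal connected subset of `S`. -/
def IsComponent {β : Type} (A : β → β → Prop) (S : Set β) (K : Set β) : Prop :=
  K ⊆ S ∧ ConnectedOn A K ∧
    ∀ K', K ⊆ K' → K' ⊆ S → ConnectedOn A K' → K' = K

namespace RTree

/-- the best match graph `G(T,σ)` (on the leaf set of `T`) is connected. -/
def BMGConnected {V C : Type} (T : RTree V) (σ : V → C) : Prop :=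
  ConnectedOn (T.BestMatch σ) T.leaves

/-- the umbrella vertices `U(G,σ)` of the BMG `G(T,σ)`: leaves having an
out-arc to every differently colored leaf. -/
def Umbrella {V C : Type} (T : RTree V) (σ : V → C) : Set V :=
  {x | T.IsLeaf x ∧ ∀ y, T.IsLeaf y → σ y ≠ σ x → T.BestMatch σ x y}

/-- `S` is closed under in-neighbours in `G(T,σ)`: `x ∈ S → N⁻(x) ⊆ S`. -/
def InClosed {V C : Type} (T : RTree V) (σ : V → C) (S : Set V) : Prop :=
  ∀ x ∈ S, ∀ y, T.BestMatch σ y x → y ∈ S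

/-- `S` is a support set of `G(T,σ)`: a maximal subset of the umbrella
vertices that is closed under in-neighbours. -/
def IsSupportSet {V C : Type} (T : RTree V) (σ : V → C) (S : Set V) : Prop :=
  S ⊆ T.Umbrella σ ∧ T.InClosed σ S ∧
    ∀ S', S ⊆ S' → S' ⊆ T.Umbrella σ → T.InClosed σ S' → S' = S

end RTree

section AuxLemmas

lemma aux_finset_exists_min {α : Type} {r : α → α → Prop}
    (htrans : ∀ a b c, r a b → r b c → r a c)
    (hanti : ∀ a b, r a b → r b a → a = b)
    (F : Finset α) (hF : F.Nonempty) :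
    ∃ m ∈ F, ∀ z ∈ F, r m z → z = m := by
  classical
  revert hF
  induction F using Finset.induction_on with
  | empty => intro hF; simp at hF
  | @insert a F ha ih =>
    intro _
    by_cases hFe : F.Nonempty
    · obtain ⟨m, hmF, hm⟩ := ih hFe
      by_cases hma : r m a
      · refine ⟨a, Finset.mem_insert_self _ _, ?_⟩
        intro z hz hrz
        rcases Finset.mem_insert.mp hz with h | h
        · exact h
        · have hmz : r m z := htrans _ _ _ hma hrz
          have hzm : z = m := hm z h hmz
          subst hzm
          exact hanti _ _ hma hrz
      · refine ⟨m, Finset.mem_insert_of_mem hmF, ?_⟩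
        intro z hz hrz
        rcases Finset.mem_insert.mp hz with h | h
        · exact absurd (h ▸ hrz) hma
        · exact hm z h hrz
    · have hF0 : F = ∅ := Finset.not_nonempty_iff_eq_empty.mp hFe
      subst hF0
      refine ⟨a, Finset.mem_insert_self _ _, ?_⟩
      intro z hz _
      simpa using hz

lemma aux_set_exists_min {α : Type} [Finite α] {r : α → α → Prop}
    (htrans : ∀ a b c, r a b → r b c → r a c)
    (hanti : ∀ a b, r a b → r b a → a = b)
    (S : Set α) (hS : S.Nonempty) :
    ∃ m ∈ S, ∀ z ∈ S, r m z → z = m := by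
  have hfin : S.Finite := Set.toFinite S
  obtain ⟨m, hmF, hm⟩ := aux_finset_exists_min htrans hanti hfin.toFinset
    (by rwa [Set.Finite.toFinset_nonempty])
  exact ⟨m, (Set.Finite.mem_toFinset hfin).mp hmF,
    fun z hz => hm z ((Set.Finite.mem_toFinset hfin).mpr hz)⟩

lemma aux_cross {β : Type} {R : β → β → Prop} {P : β → Prop} {x y : β}
    (h : Relation.ReflTransGen R x y) (hx : P x) (hy : ¬ P y) :
    ∃ a b, R a b ∧ P a ∧ ¬ P b := by
  classical
  revert hx
  induction h using Relation.ReflTransGen.head_induction_on with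
  | refl => intro hx; exact absurd hx hy
  | @head a c h' h'' ih =>
    intro hxx
    by_cases hb : P c
    · exact ih hb
    · exact ⟨a, c, h', hxx, hb⟩

namespace RTree

variable {V C : Type}

lemma exists_leaf_below [Finite V] (T : RTree V) (v : V) :
    ∃ x, T.IsLeaf x ∧ T.anc v x := by
  obtain ⟨m, hm, hmin⟩ := aux_set_exists_min T.trans T.antisymm {z | T.anc v z} ⟨v, T.refl v⟩
  exact ⟨m, fun w hw => hmin w (T.trans _ _ _ hm hw) hw, hm⟩

lemma exists_child_above [Finite V] (T : RTree V) (z : V) (hz : z ≠ T.root) :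
    ∃ u, T.IsChild u T.root ∧ T.anc u z := by
  obtain ⟨m, hm, hmin⟩ := aux_set_exists_min (r := fun a b => T.anc b a)
    (fun a b c h1 h2 => T.trans _ _ _ h2 h1) (fun a b h1 h2 => T.antisymm _ _ h2 h1)
    {w | T.anc w z ∧ w ≠ T.root} ⟨z, T.refl z, hz⟩
  have htop : ∀ w, T.anc w z → w ≠ T.root → T.anc m w := by
    intro w hw hwr
    rcases T.chain w m z hw hm.1 with h | h
    · have hwm := hmin w ⟨hw, hwr⟩ h
      rw [hwm]; exact T.refl m
    · exact h
  refine ⟨m, ⟨T.root_anc m, Ne.symm hm.2, ?_⟩, hm.1⟩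
  intro w hrw hwm
  by_cases hwr : w = T.root
  · exact Or.inl hwr
  · exact Or.inr (T.antisymm w m hwm (htop w (T.trans _ _ _ hwm hm.1) hwr))

lemma exists_bm [Finite V] (T : RTree V) (σ : V → C) (x : V) (hx : T.IsLeaf x)
    (c : C) (hc : σ x ≠ c) (y₀ : V) (hy₀ : T.IsLeaf y₀) (hcy₀ : σ y₀ = c) :
    ∃ y, T.BestMatch σ x y ∧ σ y = c := by
  obtain ⟨m, hm, hmin⟩ := aux_set_exists_min T.trans T.antisymm
    {m | T.anc m x ∧ ∃ y', T.IsLeaf y' ∧ σ y' = c ∧ T.anc m y'}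
    ⟨T.root, T.root_anc x, y₀, hy₀, hcy₀, T.root_anc y₀⟩
  obtain ⟨hmx, y, hy, hyc, hmy⟩ := hm
  have hbot : ∀ u, T.anc u x → (∃ y', T.IsLeaf y' ∧ σ y' = c ∧ T.anc u y') → T.anc u m := by
    intro u hu hu2
    rcases T.chain u m x hu hmx with h | h
    · exact h
    · rw [hmin u ⟨hu, hu2⟩ h]; exact T.refl m
  refine ⟨y, ⟨hx, hy, fun h => hc (h.trans hyc), ?_⟩, hyc⟩
  intro y' hy' hyc' u hux huy'
  exact T.trans _ _ _ (hbot u hux ⟨y', hy', hyc'.trans hyc, huy'⟩) hmy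

lemma child_disjoint (T : RTree V) {u w z : V} (hu : T.IsChild u T.root)
    (hw : T.IsChild w T.root) (huw : u ≠ w) (h1 : T.anc u z) (h2 : T.anc w z) : False := by
  rcases T.chain u w z h1 h2 with h | h
  · rcases hw.2.2 u (T.root_anc u) h with h' | h'
    · exact hu.2.1 h'.symm
    · exact huw h'
  · rcases hu.2.2 w (T.root_anc w) h with h' | h'
    · exact hw.2.1 h'.symm
    · exact huw h'.symm

lemma support_bm (T : RTree V) (σ : V → C) {v : V} (hv : v ∈ T.SupportLeaves T.root)
    {y : V} (hy : T.IsLeaf y) (hne : σ v ≠ σ y) : T.BestMatch σ v y := by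
  refine ⟨hv.2, hy, hne, ?_⟩
  intro y' hy' hyc u huv huy'
  rcases hv.1.2.2 u (T.root_anc u) huv with h | h
  · rw [h]; exact T.root_anc y
  · subst h
    exfalso
    have h1 : y' = u := hv.2 y' huy'
    exact hne (by rw [← h1, hyc])

lemma redundant_of_missing (T : RTree V) (σ : V → C) (h2 : T.TwoColored σ)
    {u₀ : V} (hch : T.IsChild u₀ T.root) (hnl : ¬ T.IsLeaf u₀)
    {c₀ : C} (hc₀ : c₀ ∈ T.leafColors σ)
    (hmono : ∀ z, T.IsLeaf z → T.anc u₀ z → σ z ≠ c₀) :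
    T.Redundant σ u₀ := by
  have hvr : u₀ ≠ T.root := Ne.symm hch.2.1
  have hex : ∃ w, T.anc u₀ w ∧ w ≠ u₀ := by
    by_contra h
    push_neg at h
    exact hnl fun w hw => h w hw
  obtain ⟨z₁, hz₁, hz₁u⟩ := hex
  have hleaf : ∀ w : {w : V // w ≠ u₀}, T.IsLeaf w.1 ↔ (T.contract u₀ hvr).IsLeaf w := by
    intro w
    constructor
    · intro hl z hz
      exact Subtype.ext (hl z.1 hz)
    · intro hl z hz
      by_cases hzu : z = u₀
      · exfalso
        have hz' : T.anc w.1 u₀ := hzu ▸ hz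
        have h1 : T.anc w.1 z₁ := T.trans _ _ _ hz' hz₁
        have h2' : (⟨z₁, hz₁u⟩ : {w : V // w ≠ u₀}) = w := hl ⟨z₁, hz₁u⟩ h1
        have h3 : z₁ = w.1 := congrArg Subtype.val h2'
        have h4 : T.anc u₀ w.1 := h3 ▸ hz₁
        exact w.2 (T.antisymm _ _ hz' h4)
      · exact congrArg Subtype.val (hl ⟨z, hzu⟩ hz)
  obtain ⟨c₁, c₂, hcc, hcol⟩ := h2
  have hcolmem : ∀ z, T.IsLeaf z → σ z = c₁ ∨ σ z = c₂ := by
    intro z hz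
    have hmem : σ z ∈ T.leafColors σ := ⟨z, hz, rfl⟩
    rw [hcol] at hmem
    simpa using hmem
  have hc₀' : c₀ = c₁ ∨ c₀ = c₂ := by rw [hcol] at hc₀; simpa using hc₀
  refine ⟨hvr, hnl, hleaf, ?_⟩
  intro x y
  constructor
  · rintro ⟨hx, hy, hxy, hcond⟩
    refine ⟨(hleaf x).mp hx, (hleaf y).mp hy, hxy, ?_⟩
    intro y' hy' hyc u hux huy'
    exact hcond y'.1 ((hleaf y').mpr hy') hyc u.1 hux huy'
  · rintro ⟨hx, hy, hxy, hcond⟩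
    have hxl := (hleaf x).mpr hx
    have hyl := (hleaf y).mpr hy
    refine ⟨hxl, hyl, hxy, ?_⟩
    intro y' hy' hyc u hux huy'
    by_cases hyu : y' = u₀
    · exact absurd (hyu ▸ hy') hnl
    · by_cases huu : u = u₀
      · exfalso
        subst huu
        have h1 : σ x.1 ≠ c₀ := hmono x.1 hxl hux
        have h2' : σ y' ≠ c₀ := hmono y' hy' huy'
        have hxm := hcolmem x.1 hxl
        have hym := hcolmem y.1 hyl
        have hkey : c₀ = σ x.1 ∨ c₀ = σ y.1 := by
          rcases hc₀' with h | h <;> rcases hxm with hx' | hx' <;> rcases hym with hy'' | hy'' <;>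
            first
              | exact Or.inl (h.trans hx'.symm)
              | exact Or.inr (h.trans hy''.symm)
              | exact absurd (hx'.trans hy''.symm) hxy
        rcases hkey with h | h
        · exact h1 h.symm
        · exact h2' (hyc.trans h.symm)
      · exact hcond ⟨y', hyu⟩ ((hleaf _).mp hy') hyc ⟨u, huu⟩ hux huy'

end RTree

end AuxLemmas

/-- Let `(T,σ)` be the least resolved tree (with root `ρ`) of
some 2-colored BMG `G(T,σ)`.  Then `G(T,σ)` is connected iff `S_ρ ≠ ∅`. -/
theorem bmg_connected_iff_root_support_nonempty {V C : Type} [Fintype V]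
    (T : RTree V) (σ : V → C) (hLRT : T.LeastResolved σ)
    (h2 : T.TwoColored σ) :
    T.BMGConnected σ ↔ (T.SupportLeaves T.root).Nonempty := by
  obtain ⟨c₁, c₂, hcc, hcol⟩ := h2
  have hcolmem : ∀ z, T.IsLeaf z → σ z = c₁ ∨ σ z = c₂ := by
    intro z hz
    have hmem : σ z ∈ T.leafColors σ := ⟨z, hz, rfl⟩
    rw [hcol] at hmem
    simpa using hmem
  have hex1 : ∃ z, T.IsLeaf z ∧ σ z = c₁ := by
    have h : c₁ ∈ T.leafColors σ := by rw [hcol]; exact Set.mem_insert _ _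
    obtain ⟨z, hz, hz'⟩ := h
    exact ⟨z, hz, hz'⟩
  have hex2 : ∃ z, T.IsLeaf z ∧ σ z = c₂ := by
    have h : c₂ ∈ T.leafColors σ := by rw [hcol]; exact Set.mem_insert_of_mem _ rfl
    obtain ⟨z, hz, hz'⟩ := h
    exact ⟨z, hz, hz'⟩
  constructor
  · intro hconn
    by_contra hS
    rw [Set.not_nonempty_iff_eq_empty] at hS
    obtain ⟨x₁, hx₁, hcx₁⟩ := hex1
    obtain ⟨x₂, hx₂, hcx₂⟩ := hex2
    have hrnl : ¬ T.IsLeaf T.root := by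
      intro h
      have h1 : x₁ = T.root := h x₁ (T.root_anc x₁)
      have h2' : x₂ = T.root := h x₂ (T.root_anc x₂)
      exact hcc (by rw [← hcx₁, ← hcx₂, h1, h2'])
    obtain ⟨u, w, huw, hu, hw⟩ := hLRT.1 T.root hrnl
    obtain ⟨xu, hxu, hxuu⟩ := T.exists_leaf_below u
    obtain ⟨xw, hxw, hxww⟩ := T.exists_leaf_below w
    have hxw_not : ¬ T.anc u xw := fun h => T.child_disjoint hu hw huw h hxww
    have hpath := hconn.2 xu hxu xw hxw
    obtain ⟨a, b, hab, hPa, hPb⟩ := aux_cross (P := fun z => T.anc u z) hpath hxuu hxw_not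
    obtain ⟨haL, hbL, harc⟩ := hab
    have hmain : ∃ u₀, T.IsChild u₀ T.root ∧
        (∃ c₀ ∈ T.leafColors σ, ∀ z, T.IsLeaf z → T.anc u₀ z → σ z ≠ c₀) := by
      rcases harc with hbm | hbm
      · refine ⟨u, hu, σ b, ⟨b, hbL, rfl⟩, ?_⟩
        intro z hz hzanc hzc
        exact hPb (hbm.2.2.2 z hz hzc u hPa hzanc)
      · have hbr : b ≠ T.root := fun h => hrnl (h ▸ hbL)
        obtain ⟨u', hu', hu'b⟩ := T.exists_child_above b hbr
        refine ⟨u', hu', σ a, ⟨a, haL, rfl⟩, ?_⟩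
        intro z hz hzanc hzc
        have ha' : T.anc u' a := hbm.2.2.2 z hz hzc u' hu'b hzanc
        have hne : u' ≠ u := fun h => hPb (h ▸ hu'b)
        exact T.child_disjoint hu' hu hne ha' hPa
    obtain ⟨u₀, hch₀, c₀, hc₀, hmono⟩ := hmain
    have hnl₀ : ¬ T.IsLeaf u₀ := by
      intro h
      have hmem : u₀ ∈ T.SupportLeaves T.root := ⟨hch₀, h⟩
      rw [hS] at hmem
      exact hmem
    exact hLRT.2 u₀ (T.redundant_of_missing σ ⟨c₁, c₂, hcc, hcol⟩ hch₀ hnl₀ hc₀ hmono)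
  · rintro ⟨v, hv⟩
    refine ⟨⟨v, hv.2⟩, ?_⟩
    have key : ∀ x ∈ T.leaves, Relation.ReflTransGen
        (fun a b => a ∈ T.leaves ∧ b ∈ T.leaves ∧
          (T.BestMatch σ a b ∨ T.BestMatch σ b a)) v x := by
      intro x hx
      by_cases hsx : σ x = σ v
      · rcases hcolmem v hv.2 with hvc | hvc
        · obtain ⟨y₀, hy₀, hy₀c⟩ := hex2
          obtain ⟨y, hbm, hyc⟩ := T.exists_bm σ x hx c₂ (by rw [hsx, hvc]; exact hcc) y₀ hy₀ hy₀c
          have h1 : T.BestMatch σ v y := T.support_bm σ hv hbm.2.1 (by rw [hvc, hyc]; exact hcc)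
          exact Relation.ReflTransGen.head ⟨hv.2, hbm.2.1, Or.inl h1⟩
            (Relation.ReflTransGen.single ⟨hbm.2.1, hx, Or.inr hbm⟩)
        · obtain ⟨y₀, hy₀, hy₀c⟩ := hex1
          obtain ⟨y, hbm, hyc⟩ := T.exists_bm σ x hx c₁
            (by rw [hsx, hvc]; exact hcc.symm) y₀ hy₀ hy₀c
          have h1 : T.BestMatch σ v y := T.support_bm σ hv hbm.2.1
            (by rw [hvc, hyc]; exact hcc.symm)
          exact Relation.ReflTransGen.head ⟨hv.2, hbm.2.1, Or.inl h1⟩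
            (Relation.ReflTransGen.single ⟨hbm.2.1, hx, Or.inr hbm⟩)
      · exact Relation.ReflTransGen.single
          ⟨hv.2, hx, Or.inl (T.support_bm σ hv hx (fun h => hsx h.symm))⟩
    intro x hx y hy
    have hsymm : Symmetric (fun a b => a ∈ T.leaves ∧ b ∈ T.leaves ∧
        (T.BestMatch σ a b ∨ T.BestMatch σ b a)) :=
      fun a b h => ⟨h.2.1, h.1, h.2.2.symm⟩
    exact Relation.ReflTransGen.trans
      ((@Relation.ReflTransGen.stdSymm _ _ ⟨hsymm⟩).symm _ _ (key x hx)) (key y hy)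
end

section
/- Let (G,σ) be a 2-BMG, (T,σ) its least resolved tree with root ρ, and S_ρ the support leaves of ρ. If W := U(G,σ) \ S_ρ is nonempty, then S_ρ ≠ ∅, G is connected, and G − S_ρ is connected. -/
namespace RTree

variable {V C : Type}

private lemma exists_bot_fin {r : V → V → Prop} (hrefl : ∀ a, r a a)
    (htrans : ∀ a b c, r a b → r b c → r a c) :
    ∀ s : Finset V, s.Nonempty →
      (∀ a ∈ s, ∀ b ∈ s, r a b ∨ r b a) → ∃ m ∈ s, ∀ a ∈ s, r a m := by
  classical
  intro s
  induction s using Finset.induction_on with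
  | empty => intro h; simp at h
  | @insert x s hx ih =>
    intro _ hcomp
    rcases s.eq_empty_or_nonempty with rfl | hs
    · exact ⟨x, by simp, by simp [hrefl]⟩
    · obtain ⟨m, hm, hmin⟩ := ih hs
        (fun a ha b hb => hcomp a (by simp [ha]) b (by simp [hb]))
      rcases hcomp x (by simp) m (by simp [hm]) with h | h
      · refine ⟨m, by simp [hm], ?_⟩
        intro a ha
        rcases Finset.mem_insert.mp ha with rfl | ha
        · exact h
        · exact hmin a ha
      · refine ⟨x, by simp, ?_⟩
        intro a ha
        rcases Finset.mem_insert.mp ha with rfl | ha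
        · exact hrefl a
        · exact htrans a m x (hmin a ha) h

lemma exists_bot (T : RTree V) [Fintype V] (S : Set V) (hS : S.Nonempty)
    (hcomp : ∀ a ∈ S, ∀ b ∈ S, T.anc a b ∨ T.anc b a) :
    ∃ m ∈ S, ∀ a ∈ S, T.anc a m := by
  classical
  have hfin : S.Finite := S.toFinite
  obtain ⟨m, hm, hmin⟩ := exists_bot_fin T.refl T.trans hfin.toFinset
    (by rwa [Set.Finite.toFinset_nonempty])
    (by intro a ha b hb
        exact hcomp a (hfin.mem_toFinset.mp ha) b (hfin.mem_toFinset.mp hb))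
  exact ⟨m, hfin.mem_toFinset.mp hm, fun a ha => hmin a (hfin.mem_toFinset.mpr ha)⟩

lemma exists_top (T : RTree V) [Fintype V] (S : Set V) (hS : S.Nonempty)
    (hcomp : ∀ a ∈ S, ∀ b ∈ S, T.anc a b ∨ T.anc b a) :
    ∃ m ∈ S, ∀ a ∈ S, T.anc m a := by
  classical
  have hfin : S.Finite := S.toFinite
  obtain ⟨m, hm, hmin⟩ := exists_bot_fin (r := fun a b => T.anc b a) T.refl
    (fun a b c hab hbc => T.trans c b a hbc hab) hfin.toFinset
    (by rwa [Set.Finite.toFinset_nonempty])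
    (by intro a ha b hb
        exact (hcomp b (hfin.mem_toFinset.mp hb) a (hfin.mem_toFinset.mp ha)))
  exact ⟨m, hfin.mem_toFinset.mp hm, fun a ha => hmin a (hfin.mem_toFinset.mpr ha)⟩

/-- for `u ≠ y` an ancestor of `y`, there is a child of `u` on the path to `y`. -/
lemma exists_child (T : RTree V) [Fintype V] {u y : V} (h : T.anc u y) (hne : u ≠ y) :
    ∃ v, T.IsChild v u ∧ T.anc v y := by
  set S : Set V := {w | T.anc u w ∧ T.anc w y ∧ w ≠ u} with hSdef
  have hyS : y ∈ S := ⟨h, T.refl y, fun hh => hne hh.symm⟩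
  obtain ⟨m, hm, htop⟩ := T.exists_top S ⟨y, hyS⟩
    (fun a ha b hb => T.chain a b y ha.2.1 hb.2.1)
  refine ⟨m, ⟨hm.1, fun hh => hm.2.2 hh.symm, ?_⟩, hm.2.1⟩
  intro w hw1 hw2
  by_cases hwu : w = u
  · exact Or.inl hwu
  · have hwS : w ∈ S := ⟨hw1, T.trans w m y hw2 hm.2.1, hwu⟩
    exact Or.inr (T.antisymm w m hw2 (htop w hwS))

lemma root_not_leaf (T : RTree V) {σ : V → C} (h2 : T.TwoColored σ) :
    ¬ T.IsLeaf T.root := by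
  obtain ⟨c₁, c₂, hne, hc⟩ := h2
  intro hleaf
  have h1 : c₁ ∈ T.leafColors σ := by rw [hc]; exact Or.inl rfl
  have h2' : c₂ ∈ T.leafColors σ := by rw [hc]; exact Or.inr rfl
  obtain ⟨x, hx, hxc⟩ := h1
  obtain ⟨y, hy, hyc⟩ := h2'
  have hx' : x = T.root := hleaf x (T.root_anc x)
  have hy' : y = T.root := hleaf y (T.root_anc y)
  exact hne (by rw [← hxc, ← hyc, hx', hy'])

/-- Non-redundancy of the edge above an inner vertex `v` produces leaves
`a, c` below `v` and `b` not below `v` with `σ a ≠ σ b = σ c`. -/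
lemma key_nonredundant (T : RTree V) (σ : V → C) (hLRT : T.LeastResolved σ)
    {v : V} (hvr : v ≠ T.root) (hvl : ¬ T.IsLeaf v) :
    ∃ a b c, T.IsLeaf a ∧ T.IsLeaf b ∧ T.IsLeaf c ∧
      T.anc v a ∧ T.anc v c ∧ ¬ T.anc v b ∧ σ a ≠ σ b ∧ σ c = σ b := by
  have hnr := hLRT.2 v
  have hvl' : ∃ w, T.anc v w ∧ w ≠ v := by
    by_contra h
    push_neg at h
    exact hvl (fun w hw => h w hw)
  have hleafiff : ∀ w : {w : V // w ≠ v},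
      T.IsLeaf w.1 ↔ (T.contract v hvr).IsLeaf w := by
    intro w
    constructor
    · intro hw z hz
      exact Subtype.ext (hw z.1 hz)
    · intro hw z hz
      by_cases hzv : z = v
      · exfalso
        obtain ⟨z', hz', hz'v⟩ := hvl'
        have hz : T.anc w.1 v := hzv ▸ hz
        have h1 : (⟨z', hz'v⟩ : {w : V // w ≠ v}) = w :=
          hw ⟨z', hz'v⟩ (T.trans _ _ _ hz hz')
        have h2 : z' = w.1 := congrArg Subtype.val h1
        exact w.2 (T.antisymm _ _ hz (h2 ▸ hz'))
      · exact congrArg Subtype.val (hw ⟨z, hzv⟩ hz)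
  have hfail : ¬ ∀ x y : {w : V // w ≠ v},
      (T.BestMatch σ x.1 y.1 ↔
        (T.contract v hvr).BestMatch (fun w => σ w.1) x y) := by
    intro hBM
    exact hnr ⟨hvr, hvl, hleafiff, hBM⟩
  rw [not_forall] at hfail
  obtain ⟨x, hfail⟩ := hfail
  rw [not_forall] at hfail
  obtain ⟨y, hxy⟩ := hfail
  have hfwd : T.BestMatch σ x.1 y.1 →
      (T.contract v hvr).BestMatch (fun w => σ w.1) x y := by
    intro hbm
    obtain ⟨hlx, hly, hσ, hall⟩ := hbm
    exact ⟨(hleafiff x).mp hlx, (hleafiff y).mp hly, hσ,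
      fun y' hy' hσ' u hux huy' =>
        hall y'.1 ((hleafiff y').mpr hy') hσ' u.1 hux huy'⟩
  have hcbm : (T.contract v hvr).BestMatch (fun w => σ w.1) x y := by
    by_contra hQ
    exact hxy ⟨fun p => absurd (hfwd p) hQ, fun q => absurd q hQ⟩
  have hnP : ¬ T.BestMatch σ x.1 y.1 := fun p => hxy ⟨fun _ => hfwd p, fun _ => p⟩
  have hlx : T.IsLeaf x.1 := (hleafiff x).mpr hcbm.1
  have hly : T.IsLeaf y.1 := (hleafiff y).mpr hcbm.2.1
  have hσ : σ x.1 ≠ σ y.1 := hcbm.2.2.1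
  have hnD : ¬ ∀ y', T.IsLeaf y' → σ y' = σ y.1 →
      ∀ u, T.anc u x.1 → T.anc u y' → T.anc u y.1 :=
    fun hD => hnP ⟨hlx, hly, hσ, hD⟩
  push_neg at hnD
  obtain ⟨c, hlc, hσc, u, hux, huc, hnuy⟩ := hnD
  have huv : u = v := by
    by_contra huv
    have hcv : c ≠ v := fun h => hvl (h ▸ hlc)
    exact hnuy (hcbm.2.2.2 ⟨c, hcv⟩ ((hleafiff ⟨c, hcv⟩).mp hlc) hσc
      ⟨u, huv⟩ hux huc)
  subst huv
  exact ⟨x.1, y.1, c, hlx, hly, hlc, hux, huc, hnuy, hσ, hσc⟩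

/-- distinct children of the root have disjoint subtrees. -/
lemma child_disjoint_s11 (T : RTree V) {v v' z : V} (hv : T.IsChild v T.root)
    (hv' : T.IsChild v' T.root) (hne : v ≠ v') (hz : T.anc v z) :
    ¬ T.anc v' z := by
  intro hz'
  rcases T.chain v v' z hz hz' with h | h
  · rcases hv'.2.2 v (T.root_anc v) h with h1 | h1
    · exact hv.2.1 h1.symm
    · exact hne h1
  · rcases hv.2.2 v' (T.root_anc v') h with h1 | h1
    · exact hv'.2.1 h1.symm
    · exact hne h1.symm

/-- every leaf has a best match of any other color present among the leaves. -/
lemma exists_best_match (T : RTree V) [Fintype V] {σ : V → C} {y : V}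
    (hy : T.IsLeaf y) {d : C} (hex : ∃ w, T.IsLeaf w ∧ σ w = d)
    (hne : σ y ≠ d) : ∃ z, σ z = d ∧ T.BestMatch σ y z := by
  obtain ⟨w₀, hw₀l, hw₀d⟩ := hex
  set S : Set V := {u | T.anc u y ∧ ∃ w, T.IsLeaf w ∧ σ w = d ∧ T.anc u w} with hSdef
  have hrS : T.root ∈ S := ⟨T.root_anc y, w₀, hw₀l, hw₀d, T.root_anc w₀⟩
  obtain ⟨m, hm, hbot⟩ := T.exists_bot S ⟨T.root, hrS⟩
    (fun a ha b hb => T.chain a b y ha.1 hb.1)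
  obtain ⟨w, hwl, hwd, hmw⟩ := hm.2
  refine ⟨w, hwd, hy, hwl, by rw [hwd]; exact hne, ?_⟩
  intro y' hy' hσ' u huy huy'
  have huS : u ∈ S := ⟨huy, y', hy', hσ'.trans hwd, huy'⟩
  exact T.trans u m w (hbot u huS) hmw

lemma reach (T : RTree V) [Fintype V] {σ : V → C} {x₀ : V} {d : C} (S : Set V)
    (hx₀S : x₀ ∈ S)
    (hU : ∀ y, T.IsLeaf y → σ y ≠ σ x₀ → T.BestMatch σ x₀ y)
    (hdne : d ≠ σ x₀)
    (hex : ∃ w, T.IsLeaf w ∧ σ w = d)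
    (hSsub : S ⊆ T.leaves)
    (hdS : ∀ z, T.IsLeaf z → σ z = d → z ∈ S)
    (hcol : ∀ z, T.IsLeaf z → σ z = σ x₀ ∨ σ z = d)
    {y : V} (hy : y ∈ S) :
    Relation.ReflTransGen
      (fun a b => a ∈ S ∧ b ∈ S ∧ (T.BestMatch σ a b ∨ T.BestMatch σ b a)) x₀ y := by
  have hyl : T.IsLeaf y := hSsub hy
  rcases hcol y hyl with hyc | hyc
  · obtain ⟨z, hzd, hbm⟩ := T.exists_best_match hyl hex
      (by rw [hyc]; exact Ne.symm hdne)
    have hzl : T.IsLeaf z := hbm.2.1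
    have hzS : z ∈ S := hdS z hzl hzd
    have h1 : Relation.ReflTransGen
        (fun a b => a ∈ S ∧ b ∈ S ∧ (T.BestMatch σ a b ∨ T.BestMatch σ b a)) x₀ z :=
      Relation.ReflTransGen.single
        ⟨hx₀S, hzS, Or.inl (hU z hzl (by rw [hzd]; exact hdne))⟩
    exact h1.tail ⟨hzS, hy, Or.inr hbm⟩
  · exact Relation.ReflTransGen.single
      ⟨hx₀S, hy, Or.inl (hU y hyl (by rw [hyc]; exact hdne))⟩

end RTree

/-- Let `(G,σ)` be a 2-BMG, `(T,σ)` its LRT with root `ρ`,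
and `S_ρ` the support leaves of `ρ`.  If `W = U(G,σ) \ S_ρ ≠ ∅`, then
`S_ρ ≠ ∅`, `G` is connected, and `G − S_ρ` is connected. -/
theorem W_nonempty_connectivity {V C : Type} [Fintype V]
    (T : RTree V) (σ : V → C) (hLRT : T.LeastResolved σ)
    (h2 : T.TwoColored σ)
    (hW : (T.Umbrella σ \ T.SupportLeaves T.root).Nonempty) :
    (T.SupportLeaves T.root).Nonempty ∧
      T.BMGConnected σ ∧
      ConnectedOn (T.BestMatch σ) (T.leaves \ T.SupportLeaves T.root) := by
  classical
  obtain ⟨x₀, hx₀U, hx₀S⟩ := hW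
  have hx₀l : T.IsLeaf x₀ := hx₀U.1
  have hrootl : ¬ T.IsLeaf T.root := T.root_not_leaf h2
  obtain ⟨c₁, c₂, hc12, hcolors⟩ := h2
  have hσx₀ : σ x₀ ∈ ({c₁, c₂} : Set C) := by
    rw [← hcolors]; exact ⟨x₀, hx₀l, rfl⟩
  -- the opposite color d
  obtain ⟨d, hdne, hex, hcol⟩ :
      ∃ d, d ≠ σ x₀ ∧ (∃ w, T.IsLeaf w ∧ σ w = d) ∧
        (∀ z, T.IsLeaf z → σ z = σ x₀ ∨ σ z = d) := by
    have hmem : ∀ z, T.IsLeaf z → σ z ∈ ({c₁, c₂} : Set C) := by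
      intro z hz; rw [← hcolors]; exact ⟨z, hz, rfl⟩
    have hgetc : ∀ e : C, e ∈ ({c₁, c₂} : Set C) → ∃ w, T.IsLeaf w ∧ σ w = e := by
      intro e he
      have : e ∈ T.leafColors σ := by rw [hcolors]; exact he
      obtain ⟨w, hw, hwe⟩ := this
      exact ⟨w, hw, hwe⟩
    rcases hσx₀ with h1 | h1
    · refine ⟨c₂, by rw [h1]; exact Ne.symm hc12, hgetc c₂ (Or.inr rfl), ?_⟩
      intro z hz
      rcases hmem z hz with h | h
      · exact Or.inl (by rw [h, h1])
      · exact Or.inr h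
    · refine ⟨c₁, by rw [h1]; exact hc12, hgetc c₁ (Or.inl rfl), ?_⟩
      intro z hz
      rcases hmem z hz with h | h
      · exact Or.inr h
      · exact Or.inl (by rw [h, h1])
  have hx₀root : x₀ ≠ T.root := fun h => hrootl (h ▸ hx₀l)
  obtain ⟨v, hvchild, hvx₀⟩ := T.exists_child (T.root_anc x₀) (Ne.symm hx₀root)
  have hvne : v ≠ x₀ := fun h => hx₀S ⟨h ▸ hvchild, hx₀l⟩
  have hvleaf : ¬ T.IsLeaf v := fun h => hvne (h x₀ hvx₀).symm
  have hvroot : v ≠ T.root := Ne.symm hvchild.2.1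
  obtain ⟨a, b, c, hla, hlb, hlc, hva, hvc, hnvb, hab, hcb⟩ :=
    T.key_nonredundant σ hLRT hvroot hvleaf
  have hac : σ a ≠ σ c := fun h => hab (h.trans hcb)
  -- there is a d-colored leaf below v
  have hdbelow : ∃ w, T.IsLeaf w ∧ σ w = d ∧ T.anc v w := by
    rcases hcol a hla with h | h
    · rcases hcol c hlc with h' | h'
      · exact absurd (h.trans h'.symm) hac
      · exact ⟨c, hlc, h', hvc⟩
    · exact ⟨a, hla, h, hva⟩
  -- all d-colored leaves are below v
  have hall : ∀ z, T.IsLeaf z → σ z = d → T.anc v z := by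
    obtain ⟨w, hwl, hwd, hvw⟩ := hdbelow
    intro z hz hzd
    have hbm := hx₀U.2 z hz (by rw [hzd]; exact hdne)
    exact hbm.2.2.2 w hwl (hwd.trans hzd.symm) v hvx₀ hvw
  -- no d-colored leaf is a support leaf of the root
  have hdnotS : ∀ z, T.IsLeaf z → σ z = d → z ∉ T.SupportLeaves T.root := by
    intro z hz hzd hmem
    have hvz := hall z hz hzd
    rcases hmem.1.2.2 v (T.root_anc v) hvz with h | h
    · exact hvroot h
    · exact hvleaf (h ▸ hz)
  -- S_ρ is nonempty
  have hSne : (T.SupportLeaves T.root).Nonempty := by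
    have hσb : σ b = σ x₀ := by
      rcases hcol b hlb with h | h
      · exact h
      · exact absurd (hall b hlb h) hnvb
    have hbroot : b ≠ T.root := fun h => hrootl (h ▸ hlb)
    obtain ⟨v', hv'child, hv'b⟩ := T.exists_child (T.root_anc b) (Ne.symm hbroot)
    by_cases hv'leaf : T.IsLeaf v'
    · exact ⟨v', hv'child, hv'leaf⟩
    · exfalso
      have hv'v : v ≠ v' := fun h => hnvb (h ▸ hv'b)
      have hv'root : v' ≠ T.root := Ne.symm hv'child.2.1
      obtain ⟨a', b', c', hla', hlb', hlc', hv'a', hv'c', _, hab', hcb'⟩ :=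
        T.key_nonredundant σ hLRT hv'root hv'leaf
      have hda' : σ a' = σ x₀ := by
        rcases hcol a' hla' with h | h
        · exact h
        · exact absurd hv'a' (T.child_disjoint_s11 hvchild hv'child hv'v (hall a' hla' h))
      have hdc' : σ c' = σ x₀ := by
        rcases hcol c' hlc' with h | h
        · exact h
        · exact absurd hv'c' (T.child_disjoint_s11 hvchild hv'child hv'v (hall c' hlc' h))
      exact hab' ((hda'.trans hdc'.symm).trans hcb')
  refine ⟨hSne, ?_, ?_⟩
  · -- G connected
    refine ⟨⟨x₀, hx₀l⟩, ?_⟩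
    intro p hp q hq
    have hsymm : Symmetric (fun a b => a ∈ T.leaves ∧ b ∈ T.leaves ∧
        (T.BestMatch σ a b ∨ T.BestMatch σ b a)) :=
      fun a b ⟨h1, h2, h3⟩ => ⟨h2, h1, h3.symm⟩
    have r1 := T.reach T.leaves hx₀l hx₀U.2 hdne hex (le_refl _)
      (fun z hz _ => hz) hcol hp
    have r2 := T.reach T.leaves hx₀l hx₀U.2 hdne hex (le_refl _)
      (fun z hz _ => hz) hcol hq
    exact ((@Relation.ReflTransGen.symmetric _ _ ⟨fun _ _ h => hsymm h⟩).symm _ _ r1).trans r2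
  · -- G - S_ρ connected
    have hx₀S' : x₀ ∈ T.leaves \ T.SupportLeaves T.root := ⟨hx₀l, hx₀S⟩
    refine ⟨⟨x₀, hx₀S'⟩, ?_⟩
    intro p hp q hq
    have hsymm : Symmetric (fun a b =>
        a ∈ T.leaves \ T.SupportLeaves T.root ∧
        b ∈ T.leaves \ T.SupportLeaves T.root ∧
        (T.BestMatch σ a b ∨ T.BestMatch σ b a)) :=
      fun a b ⟨h1, h2, h3⟩ => ⟨h2, h1, h3.symm⟩
    have r1 := T.reach (T.leaves \ T.SupportLeaves T.root) hx₀S' hx₀U.2 hdne hex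
      Set.diff_subset (fun z hz hzd => ⟨hz, hdnotS z hz hzd⟩) hcol hp
    have r2 := T.reach (T.leaves \ T.SupportLeaves T.root) hx₀S' hx₀U.2 hdne hex
      Set.diff_subset (fun z hz hzd => ⟨hz, hdnotS z hz hzd⟩) hcol hq
    exact ((@Relation.ReflTransGen.symmetric _ _ ⟨fun _ _ h => hsymm h⟩).symm _ _ r1).trans r2
end

section
/- Let (G,σ) be a 2-BMG, (T,σ) its least resolved tree with root ρ, and S_ρ the support leaves of ρ. If W := U(G,σ) \ S_ρ is nonempty, then all vertices in U(G,σ) = S_ρ ∪ W (a disjoint union) have the same color. -/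
section Aux

variable {V C : Type}

/-- every vertex has a leaf below it (finite tree). -/
lemma RTree.exists_leaf_below_s12 [Fintype V] (T : RTree V) (u : V) :
    ∃ x, T.IsLeaf x ∧ T.anc u x := by
  letI : PartialOrder V :=
    { le := T.anc
      le_refl := T.refl
      le_trans := T.trans
      le_antisymm := T.antisymm }
  obtain ⟨a, ha, hmax⟩ := Set.Finite.exists_maximalFor id {x | T.anc u x}
    (Set.toFinite _) ⟨u, T.refl u⟩
  exact ⟨a, fun w hw => T.antisymm _ _ (hmax (T.trans _ _ _ ha hw) hw) hw, ha⟩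

/-- every non-root vertex lies below some child of the root. -/
lemma RTree.exists_root_child [Fintype V] (T : RTree V) {w : V} (hw : w ≠ T.root) :
    ∃ v, T.IsChild v T.root ∧ T.anc v w := by
  letI : PartialOrder V :=
    { le := fun a b => T.anc b a
      le_refl := T.refl
      le_trans := fun a b c h1 h2 => T.trans c b a h2 h1
      le_antisymm := fun a b h1 h2 => T.antisymm a b h2 h1 }
  obtain ⟨v, hv, hmax⟩ := Set.Finite.exists_maximalFor id
    {u | T.anc u w ∧ u ≠ T.root} (Set.toFinite _) ⟨w, T.refl w, hw⟩
  refine ⟨v, ⟨T.root_anc v, Ne.symm hv.2, ?_⟩, hv.1⟩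
  intro u hru huv
  by_cases h : u = T.root
  · exact Or.inl h
  · exact Or.inr (T.antisymm _ _ huv (hmax ⟨T.trans _ _ _ huv hv.1, h⟩ huv))

/-- in an LRT, the subtree below a non-root inner vertex is not monochromatic. -/
lemma RTree.not_mono [Fintype V] (T : RTree V) (σ : V → C)
    (hLRT : T.LeastResolved σ) {v : V} (hvroot : v ≠ T.root)
    (hvleaf : ¬ T.IsLeaf v) :
    ∃ a b, T.IsLeaf a ∧ T.anc v a ∧ T.IsLeaf b ∧ T.anc v b ∧ σ a ≠ σ b := by
  by_contra hcon
  push_neg at hcon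
  apply hLRT.2 v
  refine ⟨hvroot, hvleaf, ?_⟩
  have hleaf : ∀ w : {w : V // w ≠ v},
      T.IsLeaf w.1 ↔ (T.contract v hvroot).IsLeaf w := by
    intro w
    constructor
    · intro hw u hu
      exact Subtype.ext (hw u.1 hu)
    · intro hw u hu
      by_cases h : u = v
      · exfalso
        rw [h] at hu
        simp only [RTree.IsLeaf, not_forall] at hvleaf
        obtain ⟨u', hu', hne⟩ := hvleaf
        have h1 : (⟨u', hne⟩ : {w : V // w ≠ v}) = w :=
          hw ⟨u', hne⟩ (T.trans _ _ _ hu hu')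
        have h2 : T.anc v w.1 := by
          have : u' = w.1 := congrArg Subtype.val h1
          exact this ▸ hu'
        exact w.2 (T.antisymm _ _ hu h2)
      · exact congrArg Subtype.val (hw ⟨u, h⟩ hu)
  refine ⟨hleaf, ?_⟩
  intro x y
  constructor
  · rintro ⟨hx, hy, hσ, hbm⟩
    exact ⟨(hleaf x).1 hx, (hleaf y).1 hy, hσ,
      fun y' hy' hc u hux huy' => hbm y'.1 ((hleaf y').2 hy') hc u.1 hux huy'⟩
  · rintro ⟨hx, hy, hσ, hbm⟩
    have hx' := (hleaf x).2 hx
    have hy' := (hleaf y).2 hy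
    refine ⟨hx', hy', hσ, ?_⟩
    intro y' hly' hc u hux huy'
    have hy'v : y' ≠ v := fun h => hvleaf (h ▸ hly')
    by_cases h : u = v
    · subst h
      exact absurd ((hcon x.1 y' hx' hux hly' huy').trans hc) hσ
    · exact hbm ⟨y', hy'v⟩ ((hleaf _).1 hly') hc ⟨u, h⟩ hux huy'

/-- support leaves of the root are umbrella vertices. -/
lemma RTree.support_subset_umbrella (T : RTree V) (σ : V → C) :
    T.SupportLeaves T.root ⊆ T.Umbrella σ := by
  rintro x ⟨hchild, hleaf⟩
  refine ⟨hleaf, fun y hy hσ => ⟨hleaf, hy, Ne.symm hσ, ?_⟩⟩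
  intro y' hy' hc u hux huy'
  rcases hchild.2.2 u (T.root_anc u) hux with h | h
  · exact h ▸ T.root_anc y
  · exfalso
    subst h
    have hyx := hleaf y' huy'
    rw [hyx] at hc
    exact hσ hc.symm

end Aux

/-- Let `(G,σ)` be a 2-BMG, `(T,σ)` its LRT with root `ρ`,
and `S_ρ` the support leaves of `ρ`.  If `W = U(G,σ) \ S_ρ ≠ ∅`, then
`U(G,σ) = S_ρ ∪ W` (a disjoint union) and all vertices of `U(G,σ)` have the
same color. -/
theorem W_nonempty_same_color {V C : Type} [Fintype V]
    (T : RTree V) (σ : V → C) (hLRT : T.LeastResolved σ)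
    (h2 : T.TwoColored σ)
    (hW : (T.Umbrella σ \ T.SupportLeaves T.root).Nonempty) :
    T.Umbrella σ =
        T.SupportLeaves T.root ∪ (T.Umbrella σ \ T.SupportLeaves T.root) ∧
      Disjoint (T.SupportLeaves T.root) (T.Umbrella σ \ T.SupportLeaves T.root) ∧
      ∀ x ∈ T.Umbrella σ, ∀ y ∈ T.Umbrella σ, σ x = σ y := by
  have hSU : T.SupportLeaves T.root ⊆ T.Umbrella σ :=
    RTree.support_subset_umbrella T σ
  refine ⟨(Set.union_diff_cancel hSU).symm, Set.disjoint_sdiff_right, ?_⟩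
  intro x hx y hy
  by_contra hxy
  obtain ⟨w, hwU, hwS⟩ := hW
  -- pick an umbrella vertex `z` of color different from `w`
  have hz : ∃ z, z ∈ T.Umbrella σ ∧ σ z ≠ σ w := by
    by_cases h : σ x = σ w
    · exact ⟨y, hy, fun hh => hxy (h.trans hh.symm)⟩
    · exact ⟨x, hx, h⟩
  obtain ⟨z, hzU, hzw⟩ := hz
  have hwroot : w ≠ T.root := by
    intro h
    apply hzw
    have hzwe : z = w := hwU.1 z (by rw [h]; exact T.root_anc z)
    rw [hzwe]
  obtain ⟨v, hvchild, hvw⟩ := RTree.exists_root_child T hwroot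
  have hvroot : v ≠ T.root := Ne.symm hvchild.2.1
  have hvne_w : v ≠ w := by
    intro h
    exact hwS ⟨h ▸ hvchild, hwU.1⟩
  have hvleaf : ¬ T.IsLeaf v := fun hl => hvne_w (hl w hvw).symm
  obtain ⟨a, b, hal, hva, hbl, hvb, hab⟩ :=
    RTree.not_mono T σ hLRT hvroot hvleaf
  obtain ⟨c1, c2, hc12, hcols⟩ := h2
  have color_mem : ∀ t, T.IsLeaf t → σ t = c1 ∨ σ t = c2 := by
    intro t ht
    have : σ t ∈ ({c1, c2} : Set C) := hcols ▸ Set.mem_image_of_mem σ ht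
    simpa using this
  have two : ∀ s t : V, T.IsLeaf s → T.IsLeaf t → σ s ≠ σ w → σ t ≠ σ w →
      σ s = σ t := by
    intro s t hs ht hsw htw
    have hw' := color_mem w hwU.1
    rcases color_mem s hs with h1 | h1 <;> rcases color_mem t ht with h2 | h2 <;>
      rcases hw' with h3 | h3 <;> simp_all
  -- a leaf below `v` with color different from that of `w`
  have hy1 : ∃ y₁, T.IsLeaf y₁ ∧ T.anc v y₁ ∧ σ y₁ ≠ σ w := by
    by_cases h : σ a = σ w
    · exact ⟨b, hbl, hvb, fun hh => hab (h.trans hh.symm)⟩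
    · exact ⟨a, hal, hva, h⟩
  obtain ⟨y₁, hy1l, hvy1, hy1w⟩ := hy1
  -- every leaf of the other color lies below `v` (umbrella property of `w`)
  have key : ∀ y₀, T.IsLeaf y₀ → σ y₀ ≠ σ w → T.anc v y₀ := by
    intro y₀ h0 h0w
    have hbm := hwU.2 y₀ h0 h0w
    exact hbm.2.2.2 y₁ hy1l (two y₁ y₀ hy1l h0 hy1w h0w) v hvw hvy1
  have hvz : T.anc v z := key z hzU.1 hzw
  -- every leaf of the color of `w` lies below `v` (umbrella property of `z`)
  have key2 : ∀ y₀, T.IsLeaf y₀ → σ y₀ = σ w → T.anc v y₀ := by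
    intro y₀ h0 h0w
    have hbm := hzU.2 y₀ h0 (by rw [h0w]; exact Ne.symm hzw)
    exact hbm.2.2.2 w hwU.1 h0w.symm v hvz hvw
  have allv : ∀ t, T.IsLeaf t → T.anc v t := by
    intro t ht
    by_cases h : σ t = σ w
    · exact key2 t ht h
    · exact key t ht h
  -- the root has another child, whose subtree contains a leaf: contradiction
  have hrl : ¬ T.IsLeaf T.root := fun h => hvroot (h v (T.root_anc v))
  obtain ⟨p, q, hpq, hp, hq⟩ := hLRT.1 T.root hrl
  have hu0 : ∃ u₀, T.IsChild u₀ T.root ∧ u₀ ≠ v := by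
    by_cases h : p = v
    · exact ⟨q, hq, fun hh => hpq (h.trans hh.symm)⟩
    · exact ⟨p, hp, h⟩
  obtain ⟨u₀, hu0c, hu0v⟩ := hu0
  obtain ⟨ℓ, hll, hu0l⟩ := RTree.exists_leaf_below_s12 T u₀
  have hvl := allv ℓ hll
  rcases T.chain v u₀ ℓ hvl hu0l with h | h
  · rcases hu0c.2.2 v (T.root_anc v) h with h' | h'
    · exact hvroot h'
    · exact hu0v h'.symm
  · rcases hvchild.2.2 u₀ (T.root_anc u₀) h with h' | h'
    · exact hu0c.2.1 h'.symm
    · exact hu0v h'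
end
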